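/- Let k ≥ 2 and let v_1 > v_2 > ... > v_k be positive integers with d = gcd(v_1, ..., v_k). Then every integer N such that d divides N and N > 2·⌊v_1/(d·k)⌋·v_2 − v_1 can be written as N = c_1·v_1 + c_2·v_2 + ... + c_k·v_k for some nonnegative integers c_1, ..., c_k. -/
import Mathlib

open Finset Pointwise

set_option linter.unusedSectionVars false

variable {α : Type*} [AddCommGroup α] [Fintype α] [DecidableEq α]

namespace ErdosGrahamAux

/-- admissible set : nonempty with non-full sumset -/
def IsAdm (B X : Finset α) : Prop := X.Nonempty ∧ X + B ≠ Finset.univ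

/-- the set of "boundary costs" of admissible sets -/
def costSet (B : Finset α) : Set ℕ :=
  {c | ∃ X : Finset α, IsAdm B X ∧ #(X + B) - #X = c}

/-- the connectivity -/
noncomputable def kap (B : Finset α) : ℕ := sInf (costSet B)

/-- cardinalities of minimum-cost admissible sets -/
def atomSet (B : Finset α) : Set ℕ :=
  {c | ∃ X : Finset α, IsAdm B X ∧ #(X + B) = #X + kap B ∧ #X = c}

noncomputable def aa (B : Finset α) : ℕ := sInf (atomSet B)

lemma subset_add {B : Finset α} (hB0 : (0:α) ∈ B) (X : Finset α) : X ⊆ X + B := by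
  intro x hx
  exact Finset.mem_add.2 ⟨x, hx, 0, hB0, add_zero x⟩

lemma zero_add_eq (B : Finset α) : ({0} : Finset α) + B = B := by
  ext x; simp [Finset.mem_add]

lemma ne_univ_of_subset {S T : Finset α} (h : S ⊆ T) (hT : T ≠ Finset.univ) :
    S ≠ Finset.univ := by
  rintro rfl
  exact hT (Finset.univ_subset_iff.1 h)

lemma costSet_nonempty {B : Finset α} (hBu : B ≠ Finset.univ) : (costSet B).Nonempty := by
  refine ⟨#(({0}:Finset α) + B) - #({0}:Finset α), ⟨{0}, ⟨⟨0, by simp⟩, ?_⟩, rfl⟩⟩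
  rw [zero_add_eq]; exact hBu

lemma kap_le {B X : Finset α} (h : IsAdm B X) : kap B ≤ #(X + B) - #X :=
  Nat.sInf_le ⟨X, h, rfl⟩

lemma growth {B X : Finset α} (hB0 : (0:α) ∈ B) (h : IsAdm B X) :
    #X + kap B ≤ #(X + B) := by
  have h1 := kap_le h
  have h2 := Finset.card_le_card (subset_add hB0 X)
  omega

lemma atomSet_nonempty {B : Finset α} (hB0 : (0:α) ∈ B) (hBu : B ≠ Finset.univ) :
    (atomSet B).Nonempty := by
  obtain ⟨X, hX, hc⟩ := Nat.sInf_mem (costSet_nonempty hBu)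
  have h2 := Finset.card_le_card (subset_add hB0 X)
  exact ⟨#X, X, hX, by unfold kap; omega, rfl⟩

/-- an atom exists -/
lemma exists_atom {B : Finset α} (hB0 : (0:α) ∈ B) (hBu : B ≠ Finset.univ) :
    ∃ A : Finset α, IsAdm B A ∧ #(A + B) = #A + kap B ∧ #A = aa B :=
  Nat.sInf_mem (atomSet_nonempty hB0 hBu)

lemma aa_le {B X : Finset α} (h : IsAdm B X) (hc : #(X + B) = #X + kap B) :
    aa B ≤ #X :=
  Nat.sInf_le ⟨X, h, hc, rfl⟩

/-- cardinality of a translate -/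
lemma card_add_singleton (X : Finset α) (g : α) : #(X + {g}) = #X := by
  rw [show X + {g} = X.image (· + g) by
    ext x
    simp only [Finset.mem_add, Finset.mem_image, Finset.mem_singleton]
    constructor
    · rintro ⟨y, hy, z, rfl, rfl⟩; exact ⟨y, hy, rfl⟩
    · rintro ⟨y, hy, rfl⟩; exact ⟨y, hy, g, rfl, rfl⟩]
  exact Finset.card_image_of_injective _ (add_left_injective g)

lemma add_singleton_eq_univ_iff (X : Finset α) (g : α) :
    X + {g} = Finset.univ ↔ X = Finset.univ := by
  constructor
  · intro h
    rw [← Finset.card_eq_iff_eq_univ] at h ⊢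
    rw [← card_add_singleton X g]; exact h
  · rintro rfl
    apply Finset.eq_univ_of_forall
    intro x
    exact Finset.mem_add.2 ⟨x - g, Finset.mem_univ _, g, Finset.mem_singleton_self g, by abel⟩

/-- translates of atoms are atoms -/
lemma atom_translate {B A : Finset α} (g : α) (h : IsAdm B A)
    (hc : #(A + B) = #A + kap B) (ha : #A = aa B) :
    IsAdm B (A + {g}) ∧ #((A + {g}) + B) = #(A + {g}) + kap B ∧ #(A + {g}) = aa B := by
  have he : (A + {g}) + B = (A + B) + {g} := by
    rw [add_right_comm]
  refine ⟨⟨?_, ?_⟩, ?_, ?_⟩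
  · obtain ⟨x, hx⟩ := h.1
    exact ⟨x + g, Finset.mem_add.2 ⟨x, hx, g, by simp, rfl⟩⟩
  · rw [he, Ne, add_singleton_eq_univ_iff]; exact h.2
  · rw [he, card_add_singleton, card_add_singleton, hc]
  · rw [card_add_singleton]; exact ha

lemma neg_add_neg (X B : Finset α) : (-X) + (-B) = -(X + B) := by
  ext x
  constructor
  · intro hx
    obtain ⟨y, hy, z, hz, rfl⟩ := Finset.mem_add.1 hx
    obtain ⟨a, ha, rfl⟩ := Finset.mem_neg.1 hy
    obtain ⟨b, hb, rfl⟩ := Finset.mem_neg.1 hz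
    exact Finset.mem_neg.2 ⟨a + b, Finset.mem_add.2 ⟨a, ha, b, hb, rfl⟩, by abel⟩
  · intro hx
    obtain ⟨y, hy, rfl⟩ := Finset.mem_neg.1 hx
    obtain ⟨a, ha, b, hb, rfl⟩ := Finset.mem_add.1 hy
    exact Finset.mem_add.2 ⟨-a, Finset.mem_neg.2 ⟨a, ha, rfl⟩, -b, Finset.mem_neg.2 ⟨b, hb, rfl⟩, by abel⟩

lemma neg_univ_iff (X : Finset α) : -X = Finset.univ ↔ X = Finset.univ := by
  constructor
  · intro h
    rw [← Finset.card_eq_iff_eq_univ] at h ⊢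
    rw [← Finset.card_neg X]; exact h
  · rintro rfl
    apply Finset.eq_univ_of_forall
    intro x
    exact Finset.mem_neg.2 ⟨-x, Finset.mem_univ _, neg_neg x⟩

lemma isAdm_neg {B X : Finset α} (h : IsAdm B X) : IsAdm (-B) (-X) := by
  refine ⟨?_, ?_⟩
  · obtain ⟨x, hx⟩ := h.1
    exact ⟨-x, Finset.mem_neg.2 ⟨x, hx, rfl⟩⟩
  · rw [neg_add_neg, Ne, neg_univ_iff]; exact h.2

lemma costSet_neg (B : Finset α) : costSet (-B) = costSet B := by
  ext c
  constructor
  · rintro ⟨X, hX, rfl⟩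
    refine ⟨-X, ?_, ?_⟩
    · have := isAdm_neg hX
      simpa using this
    · rw [show (-X) + B = -(X + (-B)) by rw [← neg_add_neg, neg_neg]]
      rw [Finset.card_neg, Finset.card_neg]
  · rintro ⟨X, hX, rfl⟩
    exact ⟨-X, isAdm_neg hX, by rw [neg_add_neg, Finset.card_neg, Finset.card_neg]⟩

lemma kap_neg (B : Finset α) : kap (-B) = kap B := by
  unfold kap; rw [costSet_neg]

lemma atomSet_neg (B : Finset α) : atomSet (-B) = atomSet B := by
  ext c
  constructor
  · rintro ⟨X, hX, hc, rfl⟩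
    refine ⟨-X, ?_, ?_, Finset.card_neg X⟩
    · have := isAdm_neg hX; simpa using this
    · rw [show (-X) + B = -(X + (-B)) by rw [← neg_add_neg, neg_neg]]
      rw [Finset.card_neg, Finset.card_neg, hc, kap_neg]
  · rintro ⟨X, hX, hc, rfl⟩
    refine ⟨-X, isAdm_neg hX, ?_, Finset.card_neg X⟩
    rw [neg_add_neg, Finset.card_neg, Finset.card_neg, hc, kap_neg]

lemma aa_neg (B : Finset α) : aa (-B) = aa B := by
  unfold aa; rw [atomSet_neg]


variable {B : Finset α}

/-- complement bound : `2 aa + kap ≤ |α|` -/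
lemma two_aa_add_kap_le (hB0 : (0:α) ∈ B) (hBu : B ≠ Finset.univ) :
    2 * aa B + kap B ≤ Fintype.card α := by
  obtain ⟨A, hA, hc, ha⟩ := exists_atom hB0 hBu
  set Y : Finset α := (A + B)ᶜ with hY
  have hYcard : #Y = Fintype.card α - (#A + kap B) := by
    rw [hY, Finset.card_compl, hc]
  have hAY : ∀ x ∈ A, x ∉ Y + (-B) := by
    intro x hx hmem
    obtain ⟨y, hy, z, hz, rfl⟩ := Finset.mem_add.1 hmem
    obtain ⟨b, hb, rfl⟩ := Finset.mem_neg.1 hz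
    have : y ∈ A + B := Finset.mem_add.2 ⟨y + -b, hx, b, hb, by abel⟩
    exact (Finset.mem_compl.1 hy) this
  have hYadm : IsAdm (-B) Y := by
    constructor
    · rw [hY, ← Finset.card_pos, Finset.card_compl]
      have h1 : #(A + B) < Fintype.card α := (Finset.card_lt_iff_ne_univ (A + B)).2 hA.2
      omega
    · intro h
      obtain ⟨x, hx⟩ := hA.1
      exact hAY x hx (h ▸ Finset.mem_univ x)
  have hsub : Y + (-B) ⊆ Aᶜ := by
    intro x hx
    rw [Finset.mem_compl]
    intro hxA
    exact hAY x hxA hx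
  have hYB : #(Y + (-B)) ≤ Fintype.card α - #A := by
    calc #(Y + (-B)) ≤ #(Aᶜ) := Finset.card_le_card hsub
    _ = Fintype.card α - #A := Finset.card_compl A
  -- cost of Y for -B equals kap
  have hm : #(A + B) ≤ Fintype.card α := Finset.card_le_univ _
  have h0Y : (0:α) ∈ -B := Finset.mem_neg.2 ⟨0, hB0, by abel⟩
  have hgrow : #Y + kap (-B) ≤ #(Y + (-B)) := growth h0Y hYadm
  have hkapeq : kap (-B) = kap B := kap_neg B
  have hYcost : #(Y + (-B)) = #Y + kap (-B) := by omega
  have haY : aa (-B) ≤ #Y := aa_le hYadm hYcost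
  have haeq : aa (-B) = aa B := aa_neg B
  -- also aa B ≤ #A and #A = aa B;  #A + kap B ≤ card (A+B ≠ univ means < card+1)
  have hAcard : #A + kap B ≤ Fintype.card α := hc ▸ hm
  omega

/-- two minimum atoms that intersect are equal -/
lemma atom_unique {A1 A2 : Finset α} (hB0 : (0:α) ∈ B) (hBu : B ≠ Finset.univ)
    (h1 : IsAdm B A1) (hc1 : #(A1 + B) = #A1 + kap B) (ha1 : #A1 = aa B)
    (h2 : IsAdm B A2) (hc2 : #(A2 + B) = #A2 + kap B) (ha2 : #A2 = aa B)
    (hI : (A1 ∩ A2).Nonempty) : A1 = A2 := by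
  have hsubmod : #((A1 ∩ A2) + B) + #((A1 ∪ A2) + B) ≤ #(A1 + B) + #(A2 + B) := by
    have hu : (A1 ∪ A2) + B = (A1 + B) ∪ (A2 + B) := Finset.union_add
    have hi : (A1 ∩ A2) + B ⊆ (A1 + B) ∩ (A2 + B) := by
      intro x hx
      obtain ⟨y, hy, z, hz, rfl⟩ := Finset.mem_add.1 hx
      rw [Finset.mem_inter] at hy ⊢
      exact ⟨Finset.mem_add.2 ⟨y, hy.1, z, hz, rfl⟩, Finset.mem_add.2 ⟨y, hy.2, z, hz, rfl⟩⟩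
    calc #((A1 ∩ A2) + B) + #((A1 ∪ A2) + B)
        ≤ #((A1 + B) ∩ (A2 + B)) + #((A1 + B) ∪ (A2 + B)) := by
          exact Nat.add_le_add (Finset.card_le_card hi) (le_of_eq (by rw [hu]))
      _ = #(A1 + B) + #(A2 + B) := by
          rw [add_comm]; exact Finset.card_union_add_card_inter _ _
  have hIadm : IsAdm B (A1 ∩ A2) := by
    refine ⟨hI, ne_univ_of_subset ?_ h1.2⟩
    intro x hx
    obtain ⟨y, hy, z, hz, rfl⟩ := Finset.mem_add.1 hx
    exact Finset.mem_add.2 ⟨y, (Finset.mem_inter.1 hy).1, z, hz, rfl⟩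
  have hIgrow : #(A1 ∩ A2) + kap B ≤ #((A1 ∩ A2) + B) := growth hB0 hIadm
  have hcards : #(A1 ∪ A2) + #(A1 ∩ A2) = #A1 + #A2 := Finset.card_union_add_card_inter _ _
  have hIpos : 0 < #(A1 ∩ A2) := Finset.card_pos.2 hI
  have hmbound := two_aa_add_kap_le hB0 hBu
  by_cases hU : (A1 ∪ A2) + B = Finset.univ
  · -- impossible
    exfalso
    have : #((A1 ∪ A2) + B) = Fintype.card α := by rw [hU]; exact Finset.card_univ
    omega
  · have hUadm : IsAdm B (A1 ∪ A2) := by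
      refine ⟨?_, hU⟩
      obtain ⟨x, hx⟩ := h1.1
      exact ⟨x, Finset.mem_union_left _ hx⟩
    have hUgrow : #(A1 ∪ A2) + kap B ≤ #((A1 ∪ A2) + B) := growth hB0 hUadm
    have hIcost : #((A1 ∩ A2) + B) = #(A1 ∩ A2) + kap B := by omega
    have haI : aa B ≤ #(A1 ∩ A2) := aa_le hIadm hIcost
    have hle1 : #(A1 ∩ A2) ≤ #A1 := Finset.card_le_card Finset.inter_subset_left
    have e1 : A1 ∩ A2 = A1 :=
      Finset.eq_of_subset_of_card_le Finset.inter_subset_left (by omega)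
    have hle2 : #(A1 ∩ A2) ≤ #A2 := Finset.card_le_card Finset.inter_subset_right
    have e2 : A1 ∩ A2 = A2 :=
      Finset.eq_of_subset_of_card_le Finset.inter_subset_right (by omega)
    rw [← e1, e2]

/-- There is an atom containing 0 that is closed under subtraction. -/
lemma exists_subgroup_atom (hB0 : (0:α) ∈ B) (hBu : B ≠ Finset.univ) :
    ∃ A : Finset α, IsAdm B A ∧ #(A + B) = #A + kap B ∧ #A = aa B ∧ (0:α) ∈ A ∧
      ∀ x ∈ A, ∀ y ∈ A, x - y ∈ A := by
  obtain ⟨A0, hA0, hc0, ha0⟩ := exists_atom hB0 hBu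
  obtain ⟨a0, ha0mem⟩ := hA0.1
  obtain ⟨hA, hc, ha⟩ := atom_translate (-a0) hA0 hc0 ha0
  set A : Finset α := A0 + {-a0} with hAdef
  have h0A : (0:α) ∈ A :=
    Finset.mem_add.2 ⟨a0, ha0mem, -a0, Finset.mem_singleton_self _, by abel⟩
  refine ⟨A, hA, hc, ha, h0A, ?_⟩
  -- for y ∈ A, the translate A + {-y} is an atom containing 0, hence equals A
  intro x hx y hy
  obtain ⟨hA', hc', ha'⟩ := atom_translate (-y) hA hc ha
  have h0A' : (0:α) ∈ A + {-y} :=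
    Finset.mem_add.2 ⟨y, hy, -y, Finset.mem_singleton_self _, by abel⟩
  have : A + {-y} = A := by
    refine atom_unique hB0 hBu hA' hc' ha' hA hc ha ⟨0, Finset.mem_inter.2 ⟨h0A', h0A⟩⟩
  rw [← this]
  exact Finset.mem_add.2 ⟨x, hx, -y, Finset.mem_singleton_self _, by abel⟩

end ErdosGrahamAux
namespace ErdosGrahamAux

/-- **Key growth step** (Hamidoune-type): if `0 ∈ B` and `B` generates `α`, then any
nonempty `S` with `S + B ≠ univ` grows by at least `#B / 2`. -/
theorem step {B : Finset α} (hB0 : (0:α) ∈ B)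
    (hgen : AddSubgroup.closure (B : Set α) = ⊤) {S : Finset α} (hS : S.Nonempty)
    (hSB : S + B ≠ Finset.univ) : 2 * #S + #B ≤ 2 * #(S + B) := by
  have hBu : B ≠ Finset.univ := by
    rintro rfl
    apply hSB
    obtain ⟨s0, hs0⟩ := hS
    apply Finset.eq_univ_of_forall
    intro g
    exact Finset.mem_add.2 ⟨s0, hs0, g - s0, Finset.mem_univ _, by abel⟩
  obtain ⟨A, hA, hc, ha, h0A, hsubA⟩ := exists_subgroup_atom hB0 hBu
  -- B is not contained in A
  have hBnotsub : ¬ B ⊆ A := by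
    intro hBsub
    have hH : ∀ x : α, x ∈ A := by
      let H : AddSubgroup α :=
        { carrier := ↑A
          zero_mem' := h0A
          add_mem' := by
            intro x y hx hy
            have h1 : (0:α) - y ∈ A := hsubA 0 h0A y hy
            have h2 : x - ((0:α) - y) ∈ A := hsubA x hx _ h1
            simpa [sub_sub_eq_add_sub, sub_sub] using h2
          neg_mem' := by
            intro x hx
            have : (0:α) - x ∈ A := hsubA 0 h0A x hx
            simpa using this }
      have hle : AddSubgroup.closure (B : Set α) ≤ H :=
        AddSubgroup.closure_le H |>.2 (by exact_mod_cast hBsub)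
      rw [hgen] at hle
      intro x
      exact hle (AddSubgroup.mem_top x)
    have : A + B = Finset.univ := by
      apply Finset.eq_univ_of_forall
      intro g
      exact Finset.mem_add.2 ⟨g, hH g, 0, hB0, add_zero g⟩
    exact hA.2 this
  obtain ⟨b, hbB, hbA⟩ := Finset.not_subset.1 hBnotsub
  -- A and A + {b} are disjoint subsets of A + B
  have hdisj : Disjoint A (A + {b}) := by
    rw [Finset.disjoint_left]
    intro x hx hx'
    obtain ⟨a, haA, z, hz, rfl⟩ := Finset.mem_add.1 hx'
    rw [Finset.mem_singleton] at hz
    have h3 : a + z - a ∈ A := hsubA _ hx a haA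
    simp only [add_sub_cancel_left] at h3
    rw [hz] at h3
    exact hbA h3
  have hsub1 : A ∪ (A + {b}) ⊆ A + B := by
    apply Finset.union_subset
    · exact subset_add hB0 A
    · intro x hx
      obtain ⟨a, haA, z, hz, rfl⟩ := Finset.mem_add.1 hx
      rw [Finset.mem_singleton] at hz
      exact Finset.mem_add.2 ⟨a, haA, z, by rw [hz]; exact hbB, rfl⟩
  have hcard1 : 2 * #A ≤ #(A + B) := by
    have := Finset.card_le_card hsub1
    rw [Finset.card_union_of_disjoint hdisj, card_add_singleton] at this
    omega
  have hsub2 : A ∪ B ⊆ A + B := by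
    apply Finset.union_subset (subset_add hB0 A)
    intro x hx
    exact Finset.mem_add.2 ⟨0, h0A, x, hx, zero_add x⟩
  have hcard2 : #A + #B - #(A ∩ B) ≤ #(A + B) := by
    have h1 := Finset.card_le_card hsub2
    have h2 := Finset.card_union_add_card_inter A B
    omega
  have hinter : #(A ∩ B) ≤ #A := Finset.card_le_card Finset.inter_subset_left
  have hkap : #B ≤ 2 * kap B := by omega
  have hgrow : #S + kap B ≤ #(S + B) := growth hB0 ⟨hS, hSB⟩
  omega

end ErdosGrahamAux
namespace ErdosGrahamAux

variable (B : Finset α)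

/-- iterated sumsets -/
def iter : ℕ → Finset α
  | 0 => {0}
  | (t+1) => iter t + B

variable {B}

lemma zero_mem_iter (hB0 : (0:α) ∈ B) : ∀ t, (0:α) ∈ iter B t
  | 0 => Finset.mem_singleton_self 0
  | (t+1) => Finset.mem_add.2 ⟨0, zero_mem_iter hB0 t, 0, hB0, add_zero 0⟩

lemma iter_card (hB0 : (0:α) ∈ B) (hgen : AddSubgroup.closure (B : Set α) = ⊤) :
    ∀ t : ℕ, min (Fintype.card α + 1) ((t + 2) * #B) ≤ 2 * #(iter B (t+1))
  | 0 => by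
    have : iter B 1 = B := by
      show ({0} : Finset α) + B = B
      exact zero_add_eq B
    rw [this]
    exact min_le_of_right_le (le_of_eq (by ring))
  | (t+1) => by
    show min (Fintype.card α + 1) ((t + 3) * #B) ≤ 2 * #(iter B (t + 2))
    have hIH : min (Fintype.card α + 1) ((t + 2) * #B) ≤ 2 * #(iter B (t+1)) :=
      iter_card hB0 hgen t
    have hne : (iter B (t+1)).Nonempty := ⟨0, zero_mem_iter hB0 (t+1)⟩
    have hB1 : 1 ≤ #B := Finset.card_pos.2 ⟨0, hB0⟩
    have hbridge : (t+3) * #B = (t+2) * #B + #B := by ring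
    by_cases hU : iter B (t+1) + B = Finset.univ
    · have hc : #(iter B (t+2)) = Fintype.card α := by
        show #(iter B (t+1) + B) = _
        rw [hU]; exact Finset.card_univ
      have hcard1 : 1 ≤ Fintype.card α := Fintype.card_pos_iff.2 ⟨0⟩
      have h5 : min (Fintype.card α + 1) ((t + 3) * #B) ≤ Fintype.card α + 1 :=
        min_le_left _ _
      omega
    · have hstep : 2 * #(iter B (t+1)) + #B ≤ 2 * #(iter B (t+2)) :=
        step hB0 hgen hne hU
      rcases le_total (Fintype.card α + 1) ((t+2) * #B) with h | h
      · have h5 : min (Fintype.card α + 1) ((t + 3) * #B) ≤ Fintype.card α + 1 :=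
          min_le_left _ _
        have h6 : min (Fintype.card α + 1) ((t + 2) * #B) = Fintype.card α + 1 :=
          min_eq_left h
        omega
      · have h5 : min (Fintype.card α + 1) ((t + 3) * #B) ≤ (t+3) * #B :=
          min_le_right _ _
        have h6 : min (Fintype.card α + 1) ((t + 2) * #B) = (t+2) * #B :=
          min_eq_right h
        omega

/-- every element is a sum of two elements of `iter B s` provided `(s+1)*#B > card α` -/
lemma covering (hB0 : (0:α) ∈ B) (hgen : AddSubgroup.closure (B : Set α) = ⊤)
    {s : ℕ} (hs1 : 1 ≤ s) (hs : Fintype.card α + 1 ≤ (s + 1) * #B) (g : α) :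
    ∃ x ∈ iter B s, ∃ y ∈ iter B s, x + y = g := by
  have hcard : Fintype.card α + 1 ≤ 2 * #(iter B s) := by
    obtain ⟨t, rfl⟩ : ∃ t, s = t + 1 := ⟨s - 1, by omega⟩
    have h1 := iter_card hB0 hgen t
    have hs' : Fintype.card α + 1 ≤ (t + 2) * #B := hs
    have h2 : min (Fintype.card α + 1) ((t + 2) * #B) = Fintype.card α + 1 :=
      min_eq_left hs'
    omega
  set X := iter B s with hX
  set Y := X.image (fun x => g - x) with hY
  have hYcard : #Y = #X := Finset.card_image_of_injective _ sub_right_injective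
  have hunion : #(X ∪ Y) ≤ Fintype.card α := Finset.card_le_univ _
  have hsum := Finset.card_union_add_card_inter X Y
  have hipos : 0 < #(X ∩ Y) := by omega
  obtain ⟨z, hz⟩ := Finset.card_pos.1 hipos
  rw [Finset.mem_inter] at hz
  obtain ⟨x, hxX, hxz⟩ := Finset.mem_image.1 hz.2
  exact ⟨x, hxX, z, hz.1, by rw [← hxz]; abel⟩

end ErdosGrahamAux
namespace ErdosGrahamAux

/-- elements of iterated sumsets of an image are nonneg integer combinations -/
lemma iter_repr {k : ℕ} (f : Fin k → α) :
    ∀ t, ∀ x ∈ iter (Finset.univ.image f) t,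
      ∃ c : Fin k → ℕ, (∑ i, c i) ≤ t ∧ (∑ i, c i • f i) = x
  | 0 => by
    intro x hx
    rw [show iter (Finset.univ.image f) 0 = {0} from rfl, Finset.mem_singleton] at hx
    refine ⟨fun _ => 0, by simp, by rw [hx]; simp⟩
  | (t+1) => by
    intro x hx
    obtain ⟨y, hy, b, hb, rfl⟩ := Finset.mem_add.1 hx
    obtain ⟨c, hc1, hc2⟩ := iter_repr f t y hy
    obtain ⟨j, _, rfl⟩ := Finset.mem_image.1 hb
    refine ⟨Function.update c j (c j + 1), ?_, ?_⟩
    · rw [Finset.sum_update_of_mem (Finset.mem_univ j)]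
      have h1 := Finset.add_sum_erase Finset.univ c (Finset.mem_univ j)
      rw [Finset.erase_eq] at h1
      omega
    · rw [← Finset.add_sum_erase _ (fun i => Function.update c j (c j + 1) i • f i)
        (Finset.mem_univ j)]
      have h2 : ∑ i ∈ Finset.univ.erase j, Function.update c j (c j + 1) i • f i
          = ∑ i ∈ Finset.univ.erase j, c i • f i := by
        refine Finset.sum_congr rfl fun i hi => ?_
        rw [Function.update_of_ne (Finset.mem_erase.1 hi).1]
      have h1 := Finset.add_sum_erase Finset.univ (fun i => c i • f i) (Finset.mem_univ j)
      rw [h2, Function.update_self, succ_nsmul, ← hc2, ← h1]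
      abel

/-- generation from gcd = 1 -/
lemma closure_eq_top {k m : ℕ} [NeZero m] (w : Fin k → ℕ)
    (hgcd : Finset.univ.gcd w = 1) :
    AddSubgroup.closure ((Finset.univ.image (fun i => ((w i : ZMod m)))) : Set (ZMod m)) = ⊤ := by
  set B := Finset.univ.image (fun i => ((w i : ZMod m))) with hB
  have key : ∀ s : Finset (Fin k),
      ((s.gcd w : ℕ) : ZMod m) ∈ AddSubgroup.closure (B : Set (ZMod m)) := by
    intro s
    induction s using Finset.induction_on with
    | empty =>
      rw [Finset.gcd_empty]
      exact by simpa using AddSubgroup.zero_mem (AddSubgroup.closure (B : Set (ZMod m)))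
    | @insert a s ha ih =>
      rw [Finset.gcd_insert]
      have hga : ((w a : ZMod m)) ∈ AddSubgroup.closure (B : Set (ZMod m)) := by
        apply AddSubgroup.subset_closure
        exact Finset.mem_coe.2 (Finset.mem_image.2 ⟨a, Finset.mem_univ a, rfl⟩)
      set p := w a with hp
      set q := Finset.gcd s w with hq
      have hgg : (GCDMonoid.gcd p q : ℕ) = Nat.gcd p q := rfl
      have hbez := Nat.gcd_eq_gcd_ab p q
      have hcast : ((Nat.gcd p q : ℕ) : ZMod m)
          = (Nat.gcdA p q) • ((p : ZMod m)) + (Nat.gcdB p q) • ((q : ZMod m)) := by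
        rw [zsmul_eq_mul, zsmul_eq_mul]
        have h2 : (((Nat.gcd p q : ℤ)) : ZMod m)
            = (((p : ℤ) * Nat.gcdA p q + (q : ℤ) * Nat.gcdB p q : ℤ) : ZMod m) := by
          rw [← hbez]
        push_cast at h2
        rw [h2]
        ring
      rw [hgg, hcast]
      exact AddSubgroup.add_mem _ (AddSubgroup.zsmul_mem _ hga _) (AddSubgroup.zsmul_mem _ ih _)
  have h1 : (1 : ZMod m) ∈ AddSubgroup.closure (B : Set (ZMod m)) := by
    have h2 := key Finset.univ
    rw [hgcd] at h2
    simpa using h2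
  rw [eq_top_iff]
  intro x _
  have h3 : x = x.val • (1 : ZMod m) := by
    rw [nsmul_eq_mul, mul_one]
    exact (ZMod.natCast_rightInverse x).symm
  rw [h3]
  exact AddSubgroup.nsmul_mem _ h1 _

end ErdosGrahamAux

open Finset ErdosGrahamAux

/-- **Erdős–Graham theorem (1972).**
Let `k ≥ 2` and let `v 0 > v 1 > ⋯ > v (k-1)` be positive integers with
`d = gcd (v 0, …, v (k-1))`.  Then every integer `N` such that `d ∣ N` and
`N > 2 ⌊v 0 / (d k)⌋ ⬝ v 1 − v 0` can be written as a nonnegative integer linear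
combination of `v 0, …, v (k-1)`.  (Here `v 0 / (d * k)` is natural-number
division, which equals the floor of the rational `v 0 / (d k)`.) -/
theorem erdos_graham
    (k : ℕ) (hk : 2 ≤ k) (v : Fin k → ℕ)
    (hpos : ∀ i, 0 < v i) (hanti : StrictAnti v)
    (d : ℕ) (hd : d = Finset.univ.gcd v)
    (N : ℤ) (hdvd : (d : ℤ) ∣ N)
    (hN : N > 2 * ((v ⟨0, by omega⟩ / (d * k) : ℕ) : ℤ) * (v ⟨1, by omega⟩ : ℤ)
            - (v ⟨0, by omega⟩ : ℤ)) :
    ∃ c : Fin k → ℕ, N = ∑ i, (c i : ℤ) * (v i : ℤ) := by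
  have hk0 : 0 < k := by omega
  have hk1 : 1 < k := by omega
  let i0 : Fin k := ⟨0, hk0⟩
  let i1 : Fin k := ⟨1, hk1⟩
  have hN' : N > 2 * ((v i0 / (d * k) : ℕ) : ℤ) * (v i1 : ℤ) - (v i0 : ℤ) := hN
  clear hN
  -- d is positive
  have hdvd_v : ∀ i, d ∣ v i := fun i => hd ▸ Finset.gcd_dvd (Finset.mem_univ i)
  have hdpos : 0 < d := by
    rcases Nat.eq_zero_or_pos d with h | h
    · exfalso
      have h0 : v i0 = 0 := Nat.eq_zero_of_zero_dvd (h ▸ hdvd_v i0)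
      exact (hpos i0).ne' h0
    · exact h
  -- the reduced weights
  set w : Fin k → ℕ := fun i => v i / d with hw
  have hvw : ∀ i, v i = d * w i := fun i => (Nat.mul_div_cancel' (hdvd_v i)).symm
  have hwpos : ∀ i, 0 < w i := by
    intro i
    rcases Nat.eq_zero_or_pos (w i) with h | h
    · exfalso; have := hvw i; rw [h, mul_zero] at this; exact absurd this (hpos i).ne'
    · exact h
  have hwanti : StrictAnti w := by
    intro i j hij
    have h1 := hanti hij
    rw [hvw i, hvw j] at h1
    exact Nat.lt_of_mul_lt_mul_left h1
  have hg1 : Finset.univ.gcd w = 1 := by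
    have h2 : ∀ i, d * Finset.univ.gcd w ∣ v i := fun i => by
      rw [hvw i]; exact mul_dvd_mul_left d (Finset.gcd_dvd (Finset.mem_univ i))
    have h3 : d * Finset.univ.gcd w ∣ d := by
      have h3' : d * Finset.univ.gcd w ∣ Finset.univ.gcd v :=
        Finset.dvd_gcd (fun i _ => h2 i)
      rwa [← hd] at h3'
    have h4 : d * Finset.univ.gcd w ∣ d * 1 := by simpa using h3
    exact Nat.dvd_one.1 ((mul_dvd_mul_iff_left (by omega : d ≠ 0)).1 h4)
  set m : ℕ := w i0 with hm
  -- m ≥ k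
  have hwbound : ∀ j (hj : j < k), w ⟨j, hj⟩ + j ≤ m := by
    intro j
    induction j with
    | zero =>
      intro hj
      have e : (⟨0, hj⟩ : Fin k) = i0 := rfl
      rw [e]
      omega
    | succ j ih =>
      intro hj
      have hj' : j < k := by omega
      have h1 : w ⟨j+1, hj⟩ < w ⟨j, hj'⟩ := hwanti (Fin.mk_lt_mk.2 (by omega))
      have h2 := ih hj'
      omega
  have hmk : k ≤ m := by
    have hklt : k - 1 < k := by omega
    have h1 := hwbound (k-1) hklt
    have h2 := hwpos ⟨k-1, hklt⟩
    omega
  haveI : NeZero m := ⟨by omega⟩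
  set s : ℕ := m / k with hs
  set f : Fin k → ZMod m := fun i => (w i : ZMod m) with hf
  set B : Finset (ZMod m) := Finset.univ.image f with hB
  have hf0 : f i0 = 0 := by
    show ((w i0 : ℕ) : ZMod m) = 0
    rw [← hm]; exact ZMod.natCast_self m
  have hB0 : (0 : ZMod m) ∈ B := Finset.mem_image.2 ⟨i0, Finset.mem_univ _, hf0⟩
  have hwlt : ∀ i : Fin k, i ≠ i0 → w i < m := by
    intro i hi
    have h1 : i0 < i := by
      have h2 : i.1 ≠ 0 := fun h => hi (Fin.ext h)
      have h3 : (i0 : Fin k).1 = 0 := rfl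
      rw [Fin.lt_def, h3]
      omega
    exact hwanti h1
  have hfinj : Function.Injective f := by
    intro i j hij
    by_cases hi : i = i0 <;> by_cases hj : j = i0
    · rw [hi, hj]
    · exfalso
      rw [hi, hf0] at hij
      have h1 : (f j).val = w j := ZMod.val_cast_of_lt (hwlt j hj)
      rw [← hij] at h1
      simp only [ZMod.val_zero] at h1
      exact absurd h1.symm (hwpos j).ne'
    · exfalso
      rw [hj, hf0] at hij
      have h1 : (f i).val = w i := ZMod.val_cast_of_lt (hwlt i hi)
      rw [hij] at h1
      simp only [ZMod.val_zero] at h1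
      exact absurd h1.symm (hwpos i).ne'
    · have h1 : (f i).val = w i := ZMod.val_cast_of_lt (hwlt i hi)
      have h2 : (f j).val = w j := ZMod.val_cast_of_lt (hwlt j hj)
      rw [hij] at h1
      have h3 : w i = w j := by rw [← h1, h2]
      exact hwanti.injective h3
  have hcardB : #B = k := by
    rw [hB, Finset.card_image_of_injective _ hfinj, Finset.card_univ, Fintype.card_fin]
  have hgen : AddSubgroup.closure (B : Set (ZMod m)) = ⊤ := closure_eq_top w hg1
  have hcardZ : Fintype.card (ZMod m) = m := ZMod.card m
  have hs1 : 1 ≤ s := (Nat.one_le_div_iff (by omega)).2 hmk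
  have hskm : m + 1 ≤ (s+1) * k := by
    have h1 := Nat.div_add_mod m k
    rw [← hs] at h1
    have h2 : m % k < k := Nat.mod_lt _ (by omega)
    have h3 : (s+1)*k = k * s + k := by ring
    omega
  have hs' : Fintype.card (ZMod m) + 1 ≤ (s + 1) * #B := by
    rw [hcardZ, hcardB]; exact hskm
  obtain ⟨M, hM⟩ := hdvd
  have hsv : (v i0 / (d * k) : ℕ) = s := by
    rw [hvw i0, hs, ← hm]
    exact Nat.mul_div_mul_left _ _ hdpos
  have hdZ : (0:ℤ) < (d:ℤ) := by exact_mod_cast hdpos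
  have hNineq : M > 2 * (s : ℤ) * (w i1 : ℤ) - (m : ℤ) := by
    rw [hM, hsv] at hN'
    have h1 : (v i1 : ℤ) = (d:ℤ) * (w i1 : ℤ) := by exact_mod_cast congrArg (Nat.cast (R := ℤ)) (hvw i1)
    have h2 : (v i0 : ℤ) = (d:ℤ) * (m : ℤ) := by exact_mod_cast congrArg (Nat.cast (R := ℤ)) (hvw i0)
    rw [h1, h2] at hN'
    have h3 : 2 * (s:ℤ) * ((d:ℤ) * (w i1:ℤ)) - (d:ℤ)*(m:ℤ)
        = (d:ℤ) * (2 * (s:ℤ) * (w i1:ℤ) - (m:ℤ)) := by ring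
    rw [h3] at hN'
    exact (mul_lt_mul_iff_right₀ hdZ).1 hN'
  -- covering
  obtain ⟨x, hx, y, hy, hxy⟩ := covering hB0 hgen hs1 hs' ((M : ZMod m))
  obtain ⟨cx, hcx1, hcx2⟩ := iter_repr f s x hx
  obtain ⟨cy, hcy1, hcy2⟩ := iter_repr f s y hy
  set c : Fin k → ℕ := fun i => cx i + cy i with hc
  have hcsum : ∑ i, c i ≤ 2 * s := by
    have := Finset.sum_add_distrib (s := Finset.univ) (f := cx) (g := cy)
    show ∑ i, (cx i + cy i) ≤ 2 * s
    omega
  have hcval : ∑ i, (c i) • f i = ((M : ℤ) : ZMod m) := by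
    show ∑ i, (cx i + cy i) • f i = _
    have h1 : ∀ i : Fin k, (cx i + cy i) • f i = cx i • f i + cy i • f i :=
      fun i => add_nsmul (f i) (cx i) (cy i)
    rw [Finset.sum_congr rfl (fun i _ => h1 i), Finset.sum_add_distrib, hcx2, hcy2, hxy]
  set c' : Fin k → ℕ := Function.update c i0 0 with hc'
  have hc'le : ∀ i, c' i ≤ c i := by
    intro i
    by_cases h : i = i0
    · subst h; rw [hc', Function.update_self]; omega
    · rw [hc', Function.update_of_ne h]
  have hc'sum : ∑ i, c' i ≤ 2*s :=
    le_trans (Finset.sum_le_sum fun i _ => hc'le i) hcsum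
  have hc'0 : c' i0 = 0 := Function.update_self i0 0 c
  have hc'val : ∑ i, (c' i) • f i = ((M : ℤ) : ZMod m) := by
    rw [← hcval]
    refine Finset.sum_congr rfl fun i _ => ?_
    by_cases h : i = i0
    · subst h; rw [hf0, smul_zero, smul_zero]
    · rw [hc', Function.update_of_ne h]
  set X : ℕ := ∑ i, c' i * w i with hX
  have hXval : ((X : ℕ) : ZMod m) = ((M : ℤ) : ZMod m) := by
    rw [← hc'val, hX]
    push_cast
    refine Finset.sum_congr rfl fun i _ => ?_
    rw [nsmul_eq_mul]
  have hw1le : ∀ i : Fin k, i ≠ i0 → w i ≤ w i1 := by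
    intro i hi
    rcases eq_or_ne i i1 with h | h
    · rw [h]
    · apply le_of_lt
      apply hwanti
      have h1 : i.1 ≠ 0 := fun hh => hi (Fin.ext hh)
      have h2 : i.1 ≠ 1 := fun hh => h (Fin.ext hh)
      have h3 : (i1 : Fin k).1 = 1 := rfl
      rw [Fin.lt_def, h3]
      omega
  have hXbound : X ≤ 2 * s * w i1 := by
    calc X ≤ ∑ i, c' i * w i1 := by
          apply Finset.sum_le_sum
          intro i _
          by_cases h : i = i0
          · subst h; rw [hc'0]; omega
          · exact Nat.mul_le_mul_left _ (hw1le i h)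
      _ = (∑ i, c' i) * w i1 := Eq.symm (Finset.sum_mul _ _ _)
      _ ≤ 2*s* w i1 := Nat.mul_le_mul_right _ hc'sum
  have hXM : ((X : ℤ) : ZMod m) = ((M : ℤ) : ZMod m) := by
    rw [← hXval]; push_cast; ring
  have hdvdXM : (m : ℤ) ∣ (M - (X:ℤ)) :=
    Int.ModEq.dvd ((ZMod.intCast_eq_intCast_iff _ _ _).1 hXM)
  obtain ⟨t, ht⟩ := hdvdXM
  have hmZ : (0:ℤ) < (m:ℤ) := by exact_mod_cast (by omega : 0 < m)
  have hXZ : (X:ℤ) ≤ 2 * (s:ℤ) * (w i1 : ℤ) := by exact_mod_cast hXbound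
  have htnn : 0 ≤ t := by
    have h1 : -(m:ℤ) < (m:ℤ) * t := by omega
    have h2 : (m:ℤ) * (-1) < (m:ℤ) * t := by linarith
    have h3 := (mul_lt_mul_iff_right₀ hmZ).1 h2
    omega
  refine ⟨Function.update c' i0 t.toNat, ?_⟩
  have hsplit : ∀ (g : Fin k → ℤ), ∑ i, g i = g i0 + ∑ i ∈ Finset.univ.erase i0, g i :=
    fun g => (Finset.add_sum_erase _ g (Finset.mem_univ i0)).symm
  rw [hsplit (fun i => ((Function.update c' i0 t.toNat i : ℕ) : ℤ) * (v i : ℤ))]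
  have herase : ∑ i ∈ Finset.univ.erase i0, ((Function.update c' i0 t.toNat i : ℕ):ℤ) * (v i:ℤ)
      = ∑ i ∈ Finset.univ.erase i0, ((c' i : ℕ):ℤ) * (v i:ℤ) := by
    refine Finset.sum_congr rfl fun i hi => ?_
    rw [Function.update_of_ne (Finset.mem_erase.1 hi).1]
  have hXsplit : (X:ℤ) = ∑ i ∈ Finset.univ.erase i0, ((c' i : ℕ):ℤ) * (w i:ℤ) := by
    have h1 : (X:ℤ) = ∑ i, ((c' i : ℕ):ℤ) * (w i:ℤ) := by rw [hX]; push_cast; ring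
    rw [h1, hsplit (fun i => ((c' i : ℕ):ℤ) * (w i:ℤ))]
    rw [hc'0]
    simp
  have hvsum : ∑ i ∈ Finset.univ.erase i0, ((c' i : ℕ):ℤ) * (v i:ℤ)
      = (d:ℤ) * ∑ i ∈ Finset.univ.erase i0, ((c' i : ℕ):ℤ) * (w i:ℤ) := by
    rw [Finset.mul_sum]
    refine Finset.sum_congr rfl fun i _ => ?_
    have h1 : (v i : ℤ) = (d:ℤ) * (w i : ℤ) := by exact_mod_cast congrArg (Nat.cast (R := ℤ)) (hvw i)
    rw [h1]; ring
  rw [Function.update_self, herase, hvsum, ← hXsplit]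
  have hv0 : (v i0 : ℤ) = (d:ℤ) * (m:ℤ) := by exact_mod_cast congrArg (Nat.cast (R := ℤ)) (hvw i0)
  have htt : (t.toNat : ℤ) = t := Int.toNat_of_nonneg htnn
  rw [hv0, htt, hM]
  have : M = (X:ℤ) + (m:ℤ) * t := by omega
  rw [this]
  ring
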